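/- Let f₁, …, f_n : ℝ^d → ℝ^d be similarities with contraction ratios c₁, …, c_n ∈ (0,1) (i.e. dist(f_i(x), f_i(y)) = c_i · dist(x, y) for all x, y) satisfying the open set condition: there exists a nonempty bounded open set V with ⋃_{i=1}^n f_i(V) ⊆ V and f_i(V) ∩ f_j(V) = ∅ for i ≠ j. If A is a nonempty compact set with A = f₁(A) ∪ ⋯ ∪ f_n(A), then dim_H A = s, where s is the unique real number satisfying ∑_{i=1}^n c_i^s = 1. -/

import Mathlib

open Set Filter Topology MeasureTheory
open scoped NNReal ENNReal

namespace MoranAux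

set_option linter.unusedSectionVars false

variable {n : ℕ} {X : Type*} [MetricSpace X]

/-- composition of maps along a word -/
def F (f : Fin n → X → X) : List (Fin n) → X → X :=
  fun l => l.foldr (fun i g => f i ∘ g) id

/-- product of ratios along a word -/
def rr (c : Fin n → ℝ) : List (Fin n) → ℝ :=
  fun l => (l.map c).prod

/-- prefix of length k of an infinite word -/
def pre (ω : ℕ → Fin n) (k : ℕ) : List (Fin n) := List.ofFn fun j : Fin k => ω j

@[simp] lemma F_nil (f : Fin n → X → X) : F f [] = id := rfl
@[simp] lemma F_cons (f : Fin n → X → X) (i : Fin n) (l : List (Fin n)) :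
    F f (i :: l) = f i ∘ F f l := rfl
@[simp] lemma rr_nil (c : Fin n → ℝ) : rr c [] = 1 := rfl
@[simp] lemma rr_cons (c : Fin n → ℝ) (i : Fin n) (l : List (Fin n)) :
    rr c (i :: l) = c i * rr c l := by simp [rr]

lemma F_append (f : Fin n → X → X) (l l' : List (Fin n)) :
    F f (l ++ l') = F f l ∘ F f l' := by
  induction l with
  | nil => rfl
  | cons i l ih => simp [F_cons, ih, Function.comp_assoc]

lemma rr_append (c : Fin n → ℝ) (l l' : List (Fin n)) :
    rr c (l ++ l') = rr c l * rr c l' := by simp [rr]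

@[simp] lemma pre_length (ω : ℕ → Fin n) (k : ℕ) : (pre ω k).length = k := by simp [pre]

@[simp] lemma pre_zero (ω : ℕ → Fin n) : pre ω 0 = [] := rfl

lemma pre_succ (ω : ℕ → Fin n) (k : ℕ) : pre ω (k + 1) = pre ω k ++ [ω k] := by
  simp only [pre, List.ofFn_succ', List.concat_eq_append, Fin.coe_castSucc, Fin.val_last]

lemma pre_add (ω : ℕ → Fin n) (k m : ℕ) :
    pre ω (k + m) = pre ω k ++ pre (fun j => ω (k + j)) m := by
  induction m with
  | zero => simp
  | succ m ih => rw [← Nat.add_assoc, pre_succ, ih, pre_succ, List.append_assoc]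

lemma pre_prefix (ω : ℕ → Fin n) {k m : ℕ} (h : k ≤ m) :
    pre ω k <+: pre ω m := by
  obtain ⟨j, rfl⟩ := Nat.exists_eq_add_of_le h
  rw [pre_add]; exact ⟨_, rfl⟩

lemma prefix_eq_pre {ω : ℕ → Fin n} {w : List (Fin n)} {m : ℕ} (h : w <+: pre ω m) :
    w = pre ω w.length := by
  obtain ⟨t, ht⟩ := h
  have hlen : w.length ≤ m := by
    have := congrArg List.length ht
    simp at this; omega
  obtain ⟨j, rfl⟩ := Nat.exists_eq_add_of_le hlen
  rw [pre_add] at ht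
  exact (List.append_inj_left ht.symm (by simp)).symm



set_option linter.unusedSectionVars false

variable {n : ℕ} {c : Fin n → ℝ} {s : ℝ}

lemma rr_nonneg (hc : ∀ i, 0 < c i) (l : List (Fin n)) : 0 ≤ rr c l := by
  induction l with
  | nil => simp
  | cons i l ih => simp only [rr_cons]; exact mul_nonneg (hc i).le ih

lemma rr_pos (hc : ∀ i, 0 < c i) (l : List (Fin n)) : 0 < rr c l := by
  induction l with
  | nil => simp
  | cons i l ih => simp only [rr_cons]; exact mul_pos (hc i) ih

lemma headI_cons_tail {l : List (Fin n)} (h : l ≠ []) [Inhabited (Fin n)] :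
    l.headI :: l.tail = l := by
  cases l with
  | nil => exact absurd rfl h
  | cons a l => rfl

/-- The tree covering lemma: if a finite set of words `W` is such that every infinite
word has a prefix in `W`, then the total weight `∑ (rr c w) ^ s` is at least 1. -/
lemma tree_lemma (hn : 0 < n) (hc : ∀ i, 0 < c i) (hs : ∑ i, c i ^ s = 1) :
    ∀ N (W : Finset (List (Fin n))), (∀ w ∈ W, w.length ≤ N) →
    (∀ ω : ℕ → Fin n, ∃ w ∈ W, pre ω w.length = w) →
    (1 : ℝ) ≤ ∑ w ∈ W, rr c w ^ s := by
  have hp0 : ∀ w : List (Fin n), 0 ≤ rr c w ^ s := fun w =>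
    Real.rpow_nonneg (rr_nonneg hc w) s
  have hnil : ∀ (W : Finset (List (Fin n))), [] ∈ W → (1:ℝ) ≤ ∑ w ∈ W, rr c w ^ s := by
    intro W h
    have := Finset.single_le_sum (f := fun w => rr c w ^ s) (fun w _ => hp0 w) h
    simpa using this
  haveI : Inhabited (Fin n) := ⟨⟨0, hn⟩⟩
  intro N
  induction N with
  | zero =>
    intro W hlen hcov
    obtain ⟨w, hw, hpre⟩ := hcov fun _ => default
    have : w = [] := List.length_eq_zero_iff.1 (Nat.le_zero.1 (hlen w hw))
    exact hnil W (this ▸ hw)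
  | succ N ih =>
    intro W hlen hcov
    by_cases hmem : [] ∈ W
    · exact hnil W hmem
    have hne : ∀ w ∈ W, w ≠ [] := fun w hw h => hmem (h ▸ hw)
    set Wi : Fin n → Finset (List (Fin n)) :=
      fun i => (W.filter (fun w => w.headI = i)).image List.tail with hWi
    have hcov_i : ∀ i : Fin n, ∀ ω' : ℕ → Fin n, ∃ u ∈ Wi i, pre ω' u.length = u := by
      intro i ω'
      set ω : ℕ → Fin n := fun k => Nat.casesOn k i (fun j => ω' j) with hω
      obtain ⟨w, hw, hpre⟩ := hcov ω
      obtain ⟨m, hm⟩ : ∃ m, w.length = m + 1 := by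
        cases hl : w.length with
        | zero => exact absurd (List.length_eq_zero_iff.1 hl) (hne w hw)
        | succ m => exact ⟨m, rfl⟩
      have hw_eq : w = [i] ++ pre ω' m := by
        rw [← hpre, hm, Nat.add_comm m 1, pre_add]
        have : (fun j => ω (1 + j)) = ω' := by
          funext j; rw [Nat.add_comm]
        rw [this]
        rfl
      refine ⟨w.tail, ?_, ?_⟩
      · refine Finset.mem_image.2 ⟨w, Finset.mem_filter.2 ⟨hw, ?_⟩, rfl⟩
        rw [hw_eq]; rfl
      · rw [hw_eq]; simp
    have hlen_i : ∀ i, ∀ u ∈ Wi i, u.length ≤ N := by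
      intro i u hu
      obtain ⟨w, hw, rfl⟩ := Finset.mem_image.1 hu
      have := hlen w (Finset.mem_filter.1 hw).1
      simp only [List.length_tail]
      omega
    have hfiber : ∀ i : Fin n,
        ∑ w ∈ W.filter (fun w => w.headI = i), rr c w ^ s
          = ∑ u ∈ Wi i, (c i ^ s * rr c u ^ s) := by
      intro i
      rw [hWi]
      rw [Finset.sum_image]
      · refine Finset.sum_congr rfl fun w hw => ?_
        obtain ⟨hwW, hhead⟩ := Finset.mem_filter.1 hw
        conv_lhs => rw [← headI_cons_tail (hne w hwW)]
        rw [rr_cons, hhead, Real.mul_rpow (hc i).le (rr_nonneg hc _)]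
      · intro w hw w' hw' htail
        obtain ⟨hwW, hh⟩ := Finset.mem_filter.1 hw
        obtain ⟨hwW', hh'⟩ := Finset.mem_filter.1 hw'
        rw [← headI_cons_tail (hne w hwW), ← headI_cons_tail (hne w' hwW'), hh, hh', htail]
    calc (1:ℝ) = ∑ i, c i ^ s := hs.symm
    _ ≤ ∑ i, c i ^ s * (∑ u ∈ Wi i, rr c u ^ s) := by
        refine Finset.sum_le_sum fun i _ => ?_
        nth_rewrite 1 [← mul_one (c i ^ s)]
        exact mul_le_mul_of_nonneg_left (ih (Wi i) (hlen_i i) (hcov_i i))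
          (Real.rpow_nonneg (hc i).le s)
    _ = ∑ i, ∑ w ∈ W.filter (fun w => w.headI = i), rr c w ^ s := by
        refine Finset.sum_congr rfl fun i _ => ?_
        rw [hfiber i, Finset.mul_sum]
    _ = ∑ w ∈ W, rr c w ^ s :=
        Finset.sum_fiberwise_of_maps_to (fun x _ => Finset.mem_univ x.headI) _

section Metric

variable {n : ℕ} {X : Type*} [MetricSpace X] {c : Fin n → ℝ} {f : Fin n → X → X}
  {V A : Set X}

lemma F_dist (hsim : ∀ i x y, dist (f i x) (f i y) = c i * dist x y)
    (l : List (Fin n)) (x y : X) :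
    dist (F f l x) (F f l y) = rr c l * dist x y := by
  induction l with
  | nil => simp
  | cons i l ih => simp [hsim, ih, mul_assoc]

lemma F_lipschitz (hsim : ∀ i x y, dist (f i x) (f i y) = c i * dist x y)
    (l : List (Fin n)) : LipschitzWith (rr c l).toNNReal (F f l) :=
  LipschitzWith.of_dist_le_mul fun x y => by
    rw [F_dist hsim, Real.coe_toNNReal' (rr c l)]
    exact mul_le_mul_of_nonneg_right (le_max_left _ _) dist_nonneg

lemma F_continuous (hsim : ∀ i x y, dist (f i x) (f i y) = c i * dist x y)
    (l : List (Fin n)) : Continuous (F f l) :=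
  (F_lipschitz hsim l).continuous

lemma F_antilipschitz (hc : ∀ i, 0 < c i)
    (hsim : ∀ i x y, dist (f i x) (f i y) = c i * dist x y)
    (l : List (Fin n)) : AntilipschitzWith (rr c l)⁻¹.toNNReal (F f l) :=
  AntilipschitzWith.of_le_mul_dist fun x y => by
    rw [F_dist hsim, Real.coe_toNNReal _ (inv_nonneg.2 (rr_pos hc l).le),
      ← mul_assoc, inv_mul_cancel₀ (rr_pos hc l).ne', one_mul]

lemma F_injective (hc : ∀ i, 0 < c i)
    (hsim : ∀ i x y, dist (f i x) (f i y) = c i * dist x y)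
    (l : List (Fin n)) : Function.Injective (F f l) :=
  (F_antilipschitz hc hsim l).injective

lemma F_image_subset (hFV : ∀ i, f i '' V ⊆ V) (l : List (Fin n)) :
    F f l '' V ⊆ V := by
  induction l with
  | nil => simp
  | cons i l ih =>
    rw [F_cons, Set.image_comp]
    exact (Set.image_mono ih).trans (hFV i)

lemma exists_split {α : Type*} :
    ∀ {w w' : List α}, ¬ w <+: w' → ¬ w' <+: w →
    ∃ (z u u' : List α) (i j : α), i ≠ j ∧ w = z ++ i :: u ∧ w' = z ++ j :: u' := by
  intro w
  induction w with
  | nil => intro w' h1 _; exact absurd (List.nil_prefix) h1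
  | cons a w ih =>
    intro w' h1 h2
    cases w' with
    | nil => exact absurd (List.nil_prefix) h2
    | cons a' w' =>
      by_cases hab : a = a'
      · subst hab
        obtain ⟨z, u, u', i, j, hij, hw, hw'⟩ :=
          ih (fun h => h1 (List.cons_prefix_cons.2 ⟨rfl, h⟩))
            (fun h => h2 (List.cons_prefix_cons.2 ⟨rfl, h⟩))
        exact ⟨a :: z, u, u', i, j, hij, by simp [hw], by simp [hw']⟩
      · exact ⟨[], w, w', a, a', hab, rfl, rfl⟩

lemma disjoint_F (hc : ∀ i, 0 < c i)
    (hsim : ∀ i x y, dist (f i x) (f i y) = c i * dist x y)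
    (hFV : ∀ i, f i '' V ⊆ V)
    (hdisj : ∀ i j, i ≠ j → Disjoint (f i '' V) (f j '' V))
    {w w' : List (Fin n)} (h1 : ¬ w <+: w') (h2 : ¬ w' <+: w) :
    Disjoint (F f w '' V) (F f w' '' V) := by
  obtain ⟨z, u, u', i, j, hij, rfl, rfl⟩ := exists_split h1 h2
  have key : ∀ (i : Fin n) (u : List (Fin n)),
      F f (z ++ i :: u) '' V ⊆ F f z '' (f i '' V) := by
    intro i u
    rw [F_append, F_cons, Set.image_comp, Set.image_comp]
    exact Set.image_mono (Set.image_mono (F_image_subset hFV u))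
  refine Set.disjoint_of_subset (key i u) (key j u') ?_
  exact (Set.disjoint_image_iff (F_injective hc hsim z)).2 (hdisj i j hij)

lemma F_image_A_subset (hinv : A = ⋃ i, f i '' A) (l : List (Fin n)) :
    F f l '' A ⊆ A := by
  induction l with
  | nil => simp
  | cons i l ih =>
    rw [F_cons, Set.image_comp]
    refine (Set.image_mono ih).trans ?_
    exact (Set.subset_iUnion (fun i => f i '' A) i).trans hinv.symm.subset

lemma A_subset_iUnion (hinv : A = ⋃ i, f i '' A) (k : ℕ) :
    A ⊆ ⋃ w : Fin k → Fin n, F f (List.ofFn w) '' A := by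
  induction k with
  | zero =>
    intro a ha
    exact Set.mem_iUnion.2 ⟨Fin.elim0, by simpa using ha⟩
  | succ k ih =>
    intro a ha
    rw [hinv] at ha
    obtain ⟨i, b, hb, rfl⟩ := by simpa using ha
    obtain ⟨w, x, hx, hxb⟩ := by simpa using ih hb
    refine Set.mem_iUnion.2 ⟨Fin.cons i w, ?_⟩
    have hofn : List.ofFn (Fin.cons i w : Fin (k+1) → Fin n) = i :: List.ofFn w := by
      rw [List.ofFn_succ]
      simp
    rw [hofn]
    exact ⟨x, hx, by simp [hxb]⟩

lemma rr_pre_le {b : ℝ} (hb : ∀ i, c i ≤ b) (hb0 : 0 ≤ b) (hc : ∀ i, 0 < c i)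
    (ω : ℕ → Fin n) (k : ℕ) : rr c (pre ω k) ≤ b ^ k := by
  induction k with
  | zero => simp
  | succ k ih =>
    rw [pre_succ, rr_append, pow_succ]
    refine mul_le_mul ih (by simpa using hb (ω k)) ?_ (by positivity)
    simpa using (hc (ω k)).le

end Metric

section Coding

variable {n : ℕ} {X : Type*} [MetricSpace X] [CompleteSpace X] {c : Fin n → ℝ}
  {f : Fin n → X → X} {A : Set X} {b : ℝ}

lemma exists_coding (hc : ∀ i, 0 < c i) (hb : ∀ i, c i ≤ b) (hb0 : 0 ≤ b) (hb1 : b < 1)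
    (hsim : ∀ i x y, dist (f i x) (f i y) = c i * dist x y)
    (hA : IsCompact A) (hAne : A.Nonempty) (hinv : A = ⋃ i, f i '' A) :
    ∃ π : (ℕ → Fin n) → X,
      (∀ ω k, π ω ∈ F f (pre ω k) '' A) ∧ (∀ a ∈ A, ∃ ω, π ω = a) := by
  classical
  obtain ⟨a₀, ha₀⟩ := hAne
  set DA := Metric.diam A with hDA
  set seq : (ℕ → Fin n) → ℕ → X := fun ω k => F f (pre ω k) a₀ with hseq
  have hFA : ∀ l : List (Fin n), F f l '' A ⊆ A := F_image_A_subset hinv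
  have hdistA : ∀ x ∈ A, ∀ y ∈ A, dist x y ≤ DA := fun x hx y hy =>
    Metric.dist_le_diam_of_mem hA.isBounded hx hy
  have hDA0 : 0 ≤ DA := Metric.diam_nonneg
  -- the key Cauchy-type estimate
  have hgen : ∀ (ω : ℕ → Fin n) (k : ℕ) (x y : X), x ∈ A → y ∈ A →
      dist (F f (pre ω k) x) (F f (pre ω k) y) ≤ DA * b ^ k := by
    intro ω k x y hx hy
    rw [F_dist hsim]
    calc rr c (pre ω k) * dist x y ≤ b ^ k * DA := by
          refine mul_le_mul (rr_pre_le hb hb0 hc ω k) (hdistA x hx y hy) dist_nonneg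
            (by positivity)
    _ = DA * b ^ k := mul_comm _ _
  have hcauchy : ∀ ω : ℕ → Fin n, CauchySeq (seq ω) := by
    intro ω
    refine cauchySeq_of_le_geometric b DA hb1 fun k => ?_
    have : seq ω (k+1) = F f (pre ω k) (f (ω k) a₀) := by
      rw [hseq]; simp only [pre_succ, F_append]; rfl
    rw [this]
    exact hgen ω k a₀ (f (ω k) a₀) ha₀ (hFA [ω k] ⟨a₀, ha₀, rfl⟩)
  have hlim : ∀ ω : ℕ → Fin n, ∃ x, Tendsto (seq ω) atTop (𝓝 x) := fun ω =>
    cauchySeq_tendsto_of_complete (hcauchy ω)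
  set π : (ℕ → Fin n) → X := fun ω => (hlim ω).choose with hπdef
  have hπ : ∀ ω, Tendsto (seq ω) atTop (𝓝 (π ω)) := fun ω => (hlim ω).choose_spec
  refine ⟨π, ?_, ?_⟩
  · intro ω k
    have hclosed : IsClosed (F f (pre ω k) '' A) :=
      (hA.image (F_continuous hsim _)).isClosed
    refine hclosed.mem_of_tendsto (hπ ω) (eventually_atTop.2 ⟨k, fun m hm => ?_⟩)
    obtain ⟨j, rfl⟩ := Nat.exists_eq_add_of_le hm
    rw [hseq]
    simp only
    rw [pre_add, F_append]
    exact Set.mem_image_of_mem _ (hFA _ (Set.mem_image_of_mem _ ha₀))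
  · intro a ha
    have step : ∀ x : {x // x ∈ A}, ∃ p : Fin n × {y // y ∈ A}, (x : X) = f p.1 p.2 := by
      rintro ⟨x, hx⟩
      rw [hinv] at hx
      obtain ⟨i, y, hy, hxy⟩ := by simpa using hx
      exact ⟨⟨i, ⟨y, hy⟩⟩, hxy.symm⟩
    set g : {x // x ∈ A} → Fin n × {y // y ∈ A} := fun x => (step x).choose with hgdef
    have hg : ∀ x : {x // x ∈ A}, (x : X) = f (g x).1 ((g x).2 : X) :=
      fun x => (step x).choose_spec
    set chain : ℕ → {x // x ∈ A} :=
      fun k => Nat.rec ⟨a, ha⟩ (fun _ x => (g x).2) k with hchain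
    set ω : ℕ → Fin n := fun k => (g (chain k)).1 with hω
    have hinvariant : ∀ k, F f (pre ω k) (chain k : X) = a := by
      intro k
      induction k with
      | zero => rfl
      | succ k ih =>
        rw [pre_succ, F_append]
        simp only [Function.comp_apply]
        have : F f [ω k] (chain (k+1) : X) = (chain k : X) := (hg (chain k)).symm
        rw [this, ih]
    have htends : Tendsto (seq ω) atTop (𝓝 a) := by
      rw [tendsto_iff_dist_tendsto_zero]
      have hb2 : Tendsto (fun k : ℕ => DA * b ^ k) atTop (𝓝 0) := by
        simpa using
          (tendsto_pow_atTop_nhds_zero_of_lt_one hb0 hb1).const_mul DA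
      refine squeeze_zero (fun k => dist_nonneg) (fun k => ?_) hb2
      calc dist (seq ω k) a = dist (F f (pre ω k) a₀) (F f (pre ω k) (chain k : X)) := by
            rw [hinvariant k]
      _ ≤ DA * b ^ k := hgen ω k a₀ (chain k : X) ha₀ (chain k).2
    exact ⟨ω, tendsto_nhds_unique (hπ ω) htends⟩

end Coding

section Euclid

variable {d : ℕ}

local notation "E" => EuclideanSpace ℝ (Fin d)

lemma muH_pi_eq : (μH[(d:ℝ)] : Measure (Fin d → ℝ)) = volume := by
  have := MeasureTheory.hausdorffMeasure_pi_real (ι := Fin d)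
  simpa using this

lemma muH_closedBall_ne_top (R : ℝ) :
    μH[(d:ℝ)] (Metric.closedBall (0:E) R) ≠ ∞ := by
  set e := EuclideanSpace.equiv (Fin d) ℝ
  set cb := Metric.closedBall (0:E) R
  have hd0 : (0:ℝ) ≤ d := Nat.cast_nonneg d
  have h1 : cb = (e.symm : (Fin d → ℝ) → E) '' ((e : E → (Fin d → ℝ)) '' cb) := by
    rw [← Set.image_comp]
    simp
  have h2 : μH[(d:ℝ)] cb ≤
      (‖(e.symm : (Fin d → ℝ) →L[ℝ] E)‖₊ : ℝ≥0∞) ^ (d:ℝ) *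
        μH[(d:ℝ)] ((e : E → (Fin d → ℝ)) '' cb) := by
    nth_rewrite 1 [h1]
    exact (e.symm : (Fin d → ℝ) →L[ℝ] E).lipschitz.hausdorffMeasure_image_le hd0 _
  have hbdd : Bornology.IsBounded ((e : E → (Fin d → ℝ)) '' cb) :=
    (e : E →L[ℝ] (Fin d → ℝ)).lipschitz.isBounded_image Metric.isBounded_closedBall
  obtain ⟨R', hR'⟩ := hbdd.subset_closedBall 0
  have h3 : μH[(d:ℝ)] ((e : E → (Fin d → ℝ)) '' cb) < ∞ := by
    rw [muH_pi_eq]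
    exact lt_of_le_of_lt (measure_mono hR')
      (isCompact_closedBall 0 R').measure_lt_top
  exact ne_of_lt (lt_of_le_of_lt h2 (ENNReal.mul_lt_top (ENNReal.rpow_lt_top_of_nonneg hd0 ENNReal.coe_ne_top) h3))

lemma muH_ball_pos (x : E) {r : ℝ} (hr : 0 < r) :
    0 < μH[(d:ℝ)] (Metric.ball x r) := by
  set e := EuclideanSpace.equiv (Fin d) ℝ
  have hd0 : (0:ℝ) ≤ d := Nat.cast_nonneg d
  set K : ℝ≥0 := ‖(e.symm : (Fin d → ℝ) →L[ℝ] E)‖₊ + 1 with hK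
  have hKpos : (0:ℝ≥0) < K := by positivity
  have hlip : LipschitzWith K (e.symm : (Fin d → ℝ) → E) :=
    (e.symm : (Fin d → ℝ) →L[ℝ] E).lipschitz.weaken (by simp [hK])
  set r' : ℝ := r / K with hr'
  have hr'pos : 0 < r' := div_pos hr hKpos
  set B' := Metric.ball ((e : E → (Fin d → ℝ)) x) r' with hB'
  have hsub : (e.symm : (Fin d → ℝ) → E) '' B' ⊆ Metric.ball x r := by
    rintro _ ⟨y, hy, rfl⟩
    rw [Metric.mem_ball] at hy ⊢
    calc dist ((e.symm : (Fin d → ℝ) → E) y) x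
        = dist ((e.symm : (Fin d → ℝ) → E) y)
            ((e.symm : (Fin d → ℝ) → E) ((e : E → (Fin d → ℝ)) x)) := by simp
      _ ≤ K * dist y ((e : E → (Fin d → ℝ)) x) := hlip.dist_le_mul _ _
      _ < K * r' := (mul_lt_mul_iff_right₀ (by exact_mod_cast hKpos)).2 hy
      _ = r := by rw [hr']; field_simp
  by_contra h
  push_neg at h
  have h0 : μH[(d:ℝ)] (Metric.ball x r) = 0 := le_antisymm h zero_le
  have h1 : B' = (e : E → (Fin d → ℝ)) '' ((e.symm : (Fin d → ℝ) → E) '' B') := by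
    rw [← Set.image_comp]
    simp
  have h2 : μH[(d:ℝ)] B' ≤
      (‖(e : E →L[ℝ] (Fin d → ℝ))‖₊ : ℝ≥0∞) ^ (d:ℝ) *
        μH[(d:ℝ)] ((e.symm : (Fin d → ℝ) → E) '' B') := by
    nth_rewrite 1 [h1]
    exact (e : E →L[ℝ] (Fin d → ℝ)).lipschitz.hausdorffMeasure_image_le hd0 _
  have h3 : μH[(d:ℝ)] ((e.symm : (Fin d → ℝ) → E) '' B') = 0 :=
    le_antisymm (h0 ▸ measure_mono hsub) zero_le
  rw [h3, mul_zero] at h2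
  have h4 : μH[(d:ℝ)] B' = 0 := le_antisymm h2 zero_le
  rw [muH_pi_eq] at h4
  exact absurd h4 (Metric.measure_ball_pos volume _ hr'pos).ne'

lemma muH_closedBall_scale (x : E) {ρ : ℝ} (R : ℝ) (hρ : 0 < ρ) :
    μH[(d:ℝ)] (Metric.closedBall x (R * ρ)) ≤
      ENNReal.ofReal ρ ^ (d:ℝ) * μH[(d:ℝ)] (Metric.closedBall (0:E) R) := by
  have hd0 : (0:ℝ) ≤ d := Nat.cast_nonneg d
  set g : E → E := fun y => x + ρ • y with hg
  have hlip : LipschitzWith ρ.toNNReal g := by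
    refine LipschitzWith.of_dist_le_mul fun y y' => ?_
    rw [hg]
    simp only [dist_add_left, dist_smul₀, Real.norm_eq_abs, abs_of_pos hρ]
    rw [Real.coe_toNNReal _ hρ.le]
  have hsub : Metric.closedBall x (R * ρ) ⊆ g '' Metric.closedBall (0:E) R := by
    intro z hz
    refine ⟨ρ⁻¹ • (z - x), ?_, ?_⟩
    · rw [Metric.mem_closedBall, dist_zero_right, norm_smul]
      rw [Metric.mem_closedBall] at hz
      have : dist z x = ‖z - x‖ := dist_eq_norm _ _
      rw [norm_inv, Real.norm_eq_abs, abs_of_pos hρ]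
      rw [this] at hz
      calc ρ⁻¹ * ‖z - x‖ ≤ ρ⁻¹ * (R * ρ) := by
            exact mul_le_mul_of_nonneg_left hz (inv_nonneg.2 hρ.le)
      _ = R := by field_simp
    · rw [hg]
      simp only [smul_smul, mul_inv_cancel₀ hρ.ne', one_smul]
      abel
  calc μH[(d:ℝ)] (Metric.closedBall x (R * ρ))
      ≤ μH[(d:ℝ)] (g '' Metric.closedBall (0:E) R) := measure_mono hsub
    _ ≤ (ρ.toNNReal : ℝ≥0∞) ^ (d:ℝ) * μH[(d:ℝ)] (Metric.closedBall (0:E) R) :=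
        hlip.hausdorffMeasure_image_le hd0 _
    _ = ENNReal.ofReal ρ ^ (d:ℝ) * μH[(d:ℝ)] (Metric.closedBall (0:E) R) := rfl

end Euclid

section Counting

variable {d n : ℕ}

local notation "E" => EuclideanSpace ℝ (Fin d)

lemma counting (hn : 0 < n) {c : Fin n → ℝ} {f : Fin n → E → E}
    (hc : ∀ i, c i ∈ Ioo (0:ℝ) 1)
    (hsim : ∀ i x y, dist (f i x) (f i y) = c i * dist x y)
    {V : Set E} (hVne : V.Nonempty) (hVb : Bornology.IsBounded V) (hVo : IsOpen V)
    (hFV : ∀ i, f i '' V ⊆ V)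
    (hdisj : ∀ i j, i ≠ j → Disjoint (f i '' V) (f j '' V))
    {A : Set E} (hA : IsCompact A)
    {π : (ℕ → Fin n) → E} (hπ3 : ∀ ω k, π ω ∈ F f (pre ω k) '' A)
    {s : ℝ} (hs0 : 0 ≤ s) :
    ∃ Nr : ℝ, 0 ≤ Nr ∧ ∀ ρ : ℝ, 0 < ρ → ρ ≤ 1 →
      ∀ U : Set E, Bornology.IsBounded U → Metric.diam U ≤ ρ →
      ∃ W : Finset (List (Fin n)),
        (∀ ω : ℕ → Fin n, π ω ∈ U → ∃ w ∈ W, pre ω w.length = w) ∧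
        (∑ w ∈ W, rr c w ^ s ≤ Nr * ρ ^ s) := by
  classical
  haveI : Nonempty (Fin n) := ⟨⟨0, hn⟩⟩
  have hc0 : ∀ i, 0 < c i := fun i => (hc i).1
  have hc1 : ∀ i, c i < 1 := fun i => (hc i).2
  -- constants
  set b : ℝ := Finset.univ.sup' Finset.univ_nonempty c with hbdef
  have hble : ∀ i, c i ≤ b := fun i => Finset.le_sup' c (Finset.mem_univ i)
  have hb1 : b < 1 := (Finset.sup'_lt_iff _).2 fun i _ => hc1 i
  have hb0 : 0 < b := lt_of_lt_of_le (hc0 (Classical.arbitrary _)) (hble _)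
  set cmin : ℝ := Finset.univ.inf' Finset.univ_nonempty c with hcmindef
  have hcminle : ∀ i, cmin ≤ c i := fun i => Finset.inf'_le c (Finset.mem_univ i)
  have hcmin0 : 0 < cmin := (Finset.lt_inf'_iff _).2 fun i _ => hc0 i
  have hcmin1 : cmin ≤ 1 := le_trans (hcminle (Classical.arbitrary _)) (hc1 _).le
  -- geometry of V
  obtain ⟨x₀, hx₀V⟩ := hVne
  obtain ⟨ρV, hρV, hballV⟩ := Metric.isOpen_iff.1 hVo x₀ hx₀V
  set K₀ : Set E := Metric.closedBall x₀ (ρV/2) with hK₀def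
  have hK₀V : K₀ ⊆ V :=
    (Metric.closedBall_subset_ball (by linarith)).trans hballV
  have hK₀c : IsCompact K₀ := isCompact_closedBall _ _
  have hmK₀pos : 0 < μH[(d:ℝ)] K₀ :=
    lt_of_lt_of_le (muH_ball_pos x₀ (by linarith)) (measure_mono Metric.ball_subset_closedBall)
  have hmK₀top : μH[(d:ℝ)] K₀ ≠ ∞ := by
    refine ne_top_of_le_ne_top (muH_closedBall_ne_top (dist x₀ 0 + ρV/2)) (measure_mono ?_)
    intro y hy
    rw [Metric.mem_closedBall] at hy ⊢
    calc dist y 0 ≤ dist y x₀ + dist x₀ 0 := dist_triangle _ _ _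
    _ ≤ ρV/2 + dist x₀ 0 := by linarith
    _ = dist x₀ 0 + ρV/2 := by ring
  -- global diameter bound
  set D : ℝ := Metric.diam (A ∪ V) with hDdef
  have hAVb : Bornology.IsBounded (A ∪ V) := hA.isBounded.union hVb
  have hD0 : 0 ≤ D := Metric.diam_nonneg
  set R : ℝ := D + 1 with hRdef
  set M₀ : ℝ≥0∞ := μH[(d:ℝ)] (Metric.closedBall (0:E) R) with hM₀def
  have hM₀top : M₀ ≠ ∞ := muH_closedBall_ne_top R
  have hd0 : (0:ℝ) ≤ d := Nat.cast_nonneg d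
  -- the count bound
  set z : ℝ≥0∞ := ENNReal.ofReal cmin ^ (d:ℝ) * μH[(d:ℝ)] K₀ with hzdef
  have hz0 : z ≠ 0 := by
    refine mul_ne_zero ?_ hmK₀pos.ne'
    exact (ENNReal.rpow_pos (ENNReal.ofReal_pos.2 hcmin0) ENNReal.ofReal_ne_top).ne'
  have hztop : z ≠ ∞ :=
    ENNReal.mul_ne_top (ENNReal.rpow_ne_top_of_nonneg hd0 ENNReal.ofReal_ne_top) hmK₀top
  set NBig : ℝ≥0∞ := M₀ / z with hNBigdef
  have hNBigtop : NBig ≠ ∞ := by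
    simp only [hNBigdef]
    exact (ENNReal.div_lt_top hM₀top hz0).ne
  refine ⟨NBig.toReal, ENNReal.toReal_nonneg, ?_⟩
  intro ρ hρ0 hρ1 U hUb hUdiam
  by_cases hU : ∃ ω : ℕ → Fin n, π ω ∈ U
  swap
  · refine ⟨∅, fun ω hω => absurd ⟨ω, hω⟩ hU, ?_⟩
    simp only [Finset.sum_empty]
    positivity
  obtain ⟨ω₀, hω₀⟩ := hU
  -- the cut words
  have hex : ∀ ω : ℕ → Fin n, ∃ k, rr c (pre ω k) ≤ ρ := by
    intro ω
    obtain ⟨k, hk⟩ := exists_pow_lt_of_lt_one hρ0 hb1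
    exact ⟨k, le_trans (rr_pre_le hble hb0.le hc0 ω k) hk.le⟩
  set kcut : (ℕ → Fin n) → ℕ := fun ω => Nat.find (hex ω) with hkcut
  set cut : (ℕ → Fin n) → List (Fin n) := fun ω => pre ω (kcut ω) with hcut
  have hcut_le : ∀ ω, rr c (cut ω) ≤ ρ := fun ω => Nat.find_spec (hex ω)
  have hcut_ge : ∀ ω, cmin * ρ ≤ rr c (cut ω) := by
    intro ω
    rcases Nat.eq_zero_or_pos (kcut ω) with h0 | hpos
    · have : cut ω = [] := by rw [hcut]; simp only; rw [h0, pre_zero]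
      rw [this, rr_nil]
      calc cmin * ρ ≤ 1 * 1 := by
            exact mul_le_mul hcmin1 hρ1 hρ0.le zero_le_one
      _ = 1 := by ring
    · obtain ⟨j, hj⟩ := Nat.exists_eq_succ_of_ne_zero hpos.ne'
      have hmin : ¬ rr c (pre ω j) ≤ ρ := Nat.find_min (hex ω) (show j < kcut ω by omega)
      push_neg at hmin
      have : cut ω = pre ω j ++ [ω j] := by rw [hcut]; simp only; rw [hj, pre_succ]
      rw [this, rr_append]
      calc cmin * ρ = ρ * cmin := mul_comm _ _
      _ ≤ rr c (pre ω j) * rr c [ω j] := by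
            refine mul_le_mul hmin.le ?_ hcmin0.le (rr_nonneg hc0 _)
            simpa using hcminle (ω j)
  -- finiteness of the collection of cut words
  obtain ⟨k₁, hk₁⟩ := exists_pow_lt_of_lt_one (mul_pos hcmin0 hρ0) hb1
  set Wset : Set (List (Fin n)) := {w | ∃ ω, π ω ∈ U ∧ cut ω = w} with hWset
  have hWfin : Wset.Finite := by
    refine Set.Finite.subset (List.finite_length_le (Fin n) k₁) ?_
    rintro w ⟨ω, _, rfl⟩
    simp only [Set.mem_setOf_eq, hcut, pre_length]
    by_contra hlen
    push_neg at hlen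
    have h1 : rr c (pre ω (kcut ω)) ≤ b ^ (kcut ω) := rr_pre_le hble hb0.le hc0 ω _
    have h2 : b ^ (kcut ω) ≤ b ^ k₁ := by
      exact pow_le_pow_of_le_one hb0.le hb1.le (by omega)
    have := lt_of_le_of_lt (le_trans (hcut_ge ω) (le_trans h1 h2)) hk₁
    exact lt_irrefl _ this
  set W : Finset (List (Fin n)) := hWfin.toFinset with hW
  have hmemW : ∀ w, w ∈ W ↔ ∃ ω, π ω ∈ U ∧ cut ω = w := by
    intro w
    rw [hW, Set.Finite.mem_toFinset]
    rfl
  refine ⟨W, ?_, ?_⟩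
  · intro ω hω
    refine ⟨cut ω, (hmemW _).2 ⟨ω, hω, rfl⟩, ?_⟩
    rw [hcut]
    simp only
    rw [pre_length]
  -- now the cardinality bound
  have hcard : (W.card : ℝ) ≤ NBig.toReal := by
    -- distinct cut words are incomparable hence have disjoint images
    have hincomp : ∀ w ∈ W, ∀ w' ∈ W, w ≠ w' → ¬ w <+: w' := by
      intro w hw w' hw' hne hpre
      obtain ⟨ω, _, rfl⟩ := (hmemW w).1 hw
      obtain ⟨ω', _, rfl⟩ := (hmemW w').1 hw'
      have h1 : cut ω = pre ω' (cut ω).length := prefix_eq_pre hpre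
      have h2 : (cut ω).length ≤ (cut ω').length := hpre.length_le
      have h3 : kcut ω' ≤ (cut ω).length := by
        refine Nat.find_le ?_
        rw [← h1]
        exact hcut_le ω
      have h4 : (cut ω).length = kcut ω' := by
        simp only [hcut, pre_length] at h2 h3 ⊢
        omega
      exact hne (by rw [h1, h4])
    have hdisjW : (↑W : Set (List (Fin n))).PairwiseDisjoint
        (fun w => F f w '' K₀) := by
      intro w hw w' hw' hne
      have := disjoint_F hc0 hsim hFV hdisj
        (hincomp w (by simpa using hw) w' (by simpa using hw') hne)
        (hincomp w' (by simpa using hw') w (by simpa using hw) hne.symm)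
      exact this.mono (Set.image_mono hK₀V) (Set.image_mono hK₀V)
    have hmeas : ∀ w ∈ W, MeasurableSet (F f w '' K₀) := fun w _ =>
      (hK₀c.image (F_continuous hsim w)).measurableSet
    -- each image has measure at least (cmin ρ)^d ⬝ m K₀
    have hlower : ∀ w ∈ W, ENNReal.ofReal (cmin * ρ) ^ (d:ℝ) * μH[(d:ℝ)] K₀
        ≤ μH[(d:ℝ)] (F f w '' K₀) := by
      intro w hw
      obtain ⟨ω, _, rfl⟩ := (hmemW w).1 hw
      have hr_pos : 0 < rr c (cut ω) := rr_pos hc0 _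
      have halip := F_antilipschitz hc0 hsim (cut ω)
      have h1 : μH[(d:ℝ)] K₀ ≤
          (((rr c (cut ω))⁻¹.toNNReal : ℝ≥0∞)) ^ (d:ℝ) * μH[(d:ℝ)] (F f (cut ω) '' K₀) :=
        halip.le_hausdorffMeasure_image hd0 K₀
      have hcoe : (((rr c (cut ω))⁻¹.toNNReal : ℝ≥0∞)) ^ (d:ℝ)
          = (ENNReal.ofReal (rr c (cut ω)) ^ (d:ℝ))⁻¹ := by
        rw [← ENNReal.ofReal.eq_1, ENNReal.ofReal_inv_of_pos hr_pos, ENNReal.inv_rpow]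
      rw [hcoe] at h1
      set y : ℝ≥0∞ := ENNReal.ofReal (rr c (cut ω)) ^ (d:ℝ) with hy
      have hy0 : y ≠ 0 :=
        (ENNReal.rpow_pos (ENNReal.ofReal_pos.2 hr_pos) ENNReal.ofReal_ne_top).ne'
      have hytop : y ≠ ∞ := ENNReal.rpow_ne_top_of_nonneg hd0 ENNReal.ofReal_ne_top
      have h2 : y * μH[(d:ℝ)] K₀ ≤ μH[(d:ℝ)] (F f (cut ω) '' K₀) := by
        calc y * μH[(d:ℝ)] K₀ ≤ y * (y⁻¹ * μH[(d:ℝ)] (F f (cut ω) '' K₀)) := by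
              exact mul_le_mul_right h1 y
        _ = (y * y⁻¹) * μH[(d:ℝ)] (F f (cut ω) '' K₀) := by rw [mul_assoc]
        _ = μH[(d:ℝ)] (F f (cut ω) '' K₀) := by
              rw [ENNReal.mul_inv_cancel hy0 hytop, one_mul]
      refine le_trans ?_ h2
      refine mul_le_mul_left ?_ _
      exact ENNReal.rpow_le_rpow (ENNReal.ofReal_le_ofReal (hcut_ge ω)) hd0
    -- all images are inside a common ball
    have hsubball : ∀ w ∈ W, F f w '' K₀ ⊆ Metric.closedBall (π ω₀) (R * ρ) := by
      intro w hw
      obtain ⟨ω, hωU, rfl⟩ := (hmemW w).1 hw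
      obtain ⟨a, haA, ha⟩ := hπ3 ω (kcut ω)
      rintro _ ⟨y, hy, rfl⟩
      rw [Metric.mem_closedBall]
      calc dist (F f (cut ω) y) (π ω₀)
          ≤ dist (F f (cut ω) y) (π ω) + dist (π ω) (π ω₀) := dist_triangle _ _ _
        _ ≤ rr c (cut ω) * D + ρ := by
            refine add_le_add ?_ ?_
            · rw [← ha, F_dist hsim]
              refine mul_le_mul_of_nonneg_left ?_ (rr_nonneg hc0 _)
              exact Metric.dist_le_diam_of_mem hAVb (Or.inr (hK₀V hy)) (Or.inl haA)
            · exact le_trans (Metric.dist_le_diam_of_mem hUb hωU hω₀) hUdiam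
        _ ≤ ρ * D + ρ := by
            refine add_le_add_left (mul_le_mul_of_nonneg_right (hcut_le ω) hD0) _
        _ = R * ρ := by rw [hRdef]; ring
    -- volume comparison
    have hsum : (W.card : ℝ≥0∞) * (ENNReal.ofReal (cmin * ρ) ^ (d:ℝ) * μH[(d:ℝ)] K₀)
        ≤ ENNReal.ofReal ρ ^ (d:ℝ) * M₀ := by
      calc (W.card : ℝ≥0∞) * (ENNReal.ofReal (cmin * ρ) ^ (d:ℝ) * μH[(d:ℝ)] K₀)
          = W.card • (ENNReal.ofReal (cmin * ρ) ^ (d:ℝ) * μH[(d:ℝ)] K₀) := by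
            rw [nsmul_eq_mul]
        _ ≤ ∑ w ∈ W, μH[(d:ℝ)] (F f w '' K₀) := Finset.card_nsmul_le_sum W _ _ hlower
        _ = μH[(d:ℝ)] (⋃ w ∈ W, F f w '' K₀) :=
            (measure_biUnion_finset hdisjW hmeas).symm
        _ ≤ μH[(d:ℝ)] (Metric.closedBall (π ω₀) (R * ρ)) := by
            refine measure_mono (Set.iUnion₂_subset hsubball)
        _ ≤ ENNReal.ofReal ρ ^ (d:ℝ) * M₀ := muH_closedBall_scale _ R hρ0
    -- cancel the ρ-factor
    have hρofr : ENNReal.ofReal (cmin * ρ) ^ (d:ℝ)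
        = ENNReal.ofReal cmin ^ (d:ℝ) * ENNReal.ofReal ρ ^ (d:ℝ) := by
      rw [ENNReal.ofReal_mul hcmin0.le, ENNReal.mul_rpow_of_nonneg _ _ hd0]
    have hyρ0 : ENNReal.ofReal ρ ^ (d:ℝ) ≠ 0 :=
      (ENNReal.rpow_pos (ENNReal.ofReal_pos.2 hρ0) ENNReal.ofReal_ne_top).ne'
    have hyρtop : ENNReal.ofReal ρ ^ (d:ℝ) ≠ ∞ :=
      ENNReal.rpow_ne_top_of_nonneg hd0 ENNReal.ofReal_ne_top
    have hcardE : (W.card : ℝ≥0∞) ≤ NBig := by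
      rw [hNBigdef, ENNReal.le_div_iff_mul_le (Or.inl hz0) (Or.inl hztop)]
      rw [← ENNReal.mul_le_mul_iff_left hyρ0 hyρtop]
      calc (W.card : ℝ≥0∞) * z * ENNReal.ofReal ρ ^ (d:ℝ)
          = (W.card : ℝ≥0∞) * (ENNReal.ofReal (cmin * ρ) ^ (d:ℝ) * μH[(d:ℝ)] K₀) := by
            rw [hρofr, hzdef]; ring
        _ ≤ ENNReal.ofReal ρ ^ (d:ℝ) * M₀ := hsum
        _ = M₀ * ENNReal.ofReal ρ ^ (d:ℝ) := mul_comm _ _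
    calc (W.card : ℝ) = ((W.card : ℝ≥0∞)).toReal := by simp
    _ ≤ NBig.toReal := ENNReal.toReal_mono hNBigtop hcardE
  -- conclude the sum bound
  calc ∑ w ∈ W, rr c w ^ s ≤ ∑ _w ∈ W, ρ ^ s := by
        refine Finset.sum_le_sum fun w hw => ?_
        obtain ⟨ω, _, rfl⟩ := (hmemW w).1 hw
        exact Real.rpow_le_rpow (rr_nonneg hc0 _) (hcut_le ω) hs0
  _ = (W.card : ℝ) * ρ ^ s := by rw [Finset.sum_const, nsmul_eq_mul]
  _ ≤ NBig.toReal * ρ ^ s := by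
        refine mul_le_mul_of_nonneg_right hcard (Real.rpow_nonneg hρ0.le s)

end Counting

section Upper

variable {d n : ℕ}

local notation "E" => EuclideanSpace ℝ (Fin d)

lemma upper_zero {c : Fin n → ℝ} {f : Fin n → E → E}
    (hc : ∀ i, c i ∈ Ioo (0:ℝ) 1)
    (hsim : ∀ i x y, dist (f i x) (f i y) = c i * dist x y)
    {A : Set E} (hA : IsCompact A) (hinv : A = ⋃ i, f i '' A)
    {t : ℝ} (ht0 : 0 ≤ t) (ht : ∑ i, c i ^ t < 1) :
    μH[t] A = 0 := by
  classical
  rcases Nat.eq_zero_or_pos n with hn0 | hn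
  · subst hn0
    have : A = ∅ := by
      rw [hinv]
      simp
    rw [this]
    simp
  haveI : Nonempty (Fin n) := ⟨⟨0, hn⟩⟩
  have hc0 : ∀ i, 0 < c i := fun i => (hc i).1
  have hc1 : ∀ i, c i < 1 := fun i => (hc i).2
  set b : ℝ := Finset.univ.sup' Finset.univ_nonempty c with hbdef
  have hble : ∀ i, c i ≤ b := fun i => Finset.le_sup' c (Finset.mem_univ i)
  have hb1 : b < 1 := (Finset.sup'_lt_iff _).2 fun i _ => hc1 i
  have hb0 : 0 < b := lt_of_lt_of_le (hc0 (Classical.arbitrary _)) (hble _)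
  set DA : ℝ := Metric.diam A with hDA
  have hDA0 : 0 ≤ DA := Metric.diam_nonneg
  set lam : ℝ := ∑ i, c i ^ t with hlam
  have hlam0 : 0 ≤ lam := Finset.sum_nonneg fun i _ => Real.rpow_nonneg (hc0 i).le t
  have hediamA : EMetric.diam A ≤ ENNReal.ofReal DA :=
    le_of_eq (ENNReal.ofReal_toReal hA.isBounded.ediam_ne_top).symm
  -- the covering bound
  have hcover := MeasureTheory.Measure.hausdorffMeasure_le_liminf_sum (ι := fun k : ℕ => Fin k → Fin n)
    t A (l := atTop) (fun k => ENNReal.ofReal (b ^ k * DA))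
    ?_ (fun k w => F f (List.ofFn w) '' A) ?_ ?_
  · refine le_antisymm (le_trans hcover ?_) zero_le
    have hterm : ∀ k : ℕ, (∑ w : Fin k → Fin n,
        EMetric.diam (F f (List.ofFn w) '' A) ^ t) ≤ ENNReal.ofReal (DA ^ t * lam ^ k) := by
      intro k
      have hbound : ∀ w : Fin k → Fin n,
          EMetric.diam (F f (List.ofFn w) '' A) ^ t
            ≤ ENNReal.ofReal ((rr c (List.ofFn w) * DA) ^ t) := by
        intro w
        have h1 : EMetric.diam (F f (List.ofFn w) '' A) ≤
            ((rr c (List.ofFn w)).toNNReal : ℝ≥0∞) * EMetric.diam A :=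
          (F_lipschitz hsim (List.ofFn w)).ediam_image_le A
        have h2 : ((rr c (List.ofFn w)).toNNReal : ℝ≥0∞) * EMetric.diam A
            ≤ ENNReal.ofReal (rr c (List.ofFn w)) * ENNReal.ofReal DA :=
          mul_le_mul_right hediamA _
        rw [← ENNReal.ofReal_mul (rr_nonneg hc0 _)] at h2
        rw [← ENNReal.ofReal_rpow_of_nonneg (mul_nonneg (rr_nonneg hc0 _) hDA0) ht0]
        exact ENNReal.rpow_le_rpow (h1.trans h2) ht0
      calc (∑ w : Fin k → Fin n, EMetric.diam (F f (List.ofFn w) '' A) ^ t)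
          ≤ ∑ w : Fin k → Fin n, ENNReal.ofReal ((rr c (List.ofFn w) * DA) ^ t) :=
            Finset.sum_le_sum fun w _ => hbound w
        _ = ENNReal.ofReal (∑ w : Fin k → Fin n, (rr c (List.ofFn w) * DA) ^ t) :=
            (ENNReal.ofReal_sum_of_nonneg fun w _ =>
              Real.rpow_nonneg (mul_nonneg (rr_nonneg hc0 _) hDA0) t).symm
        _ = ENNReal.ofReal (DA ^ t * lam ^ k) := by
            congr 1
            have hrw : ∀ w : Fin k → Fin n,
                (rr c (List.ofFn w) * DA) ^ t = DA ^ t * ∏ j, (c (w j)) ^ t := by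
              intro w
              have h3 : rr c (List.ofFn w) = ∏ j, c (w j) := by
                rw [rr, List.map_ofFn, List.prod_ofFn]
                rfl
              rw [Real.mul_rpow (rr_nonneg hc0 _) hDA0, h3, mul_comm,
                ← Real.finset_prod_rpow _ _ (fun j _ => (hc0 (w j)).le)]
            rw [Finset.sum_congr rfl fun w _ => hrw w, ← Finset.mul_sum]
            congr 1
            calc ∑ w : Fin k → Fin n, ∏ j, c (w j) ^ t
                = ∏ _j : Fin k, ∑ i, c i ^ t := by
                  rw [Finset.prod_univ_sum (fun _ : Fin k => (Finset.univ : Finset (Fin n)))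
                    (fun _ i => c i ^ t), Fintype.piFinset_univ]
              _ = (∑ i, c i ^ t) ^ k := by simp
    have htend : Tendsto (fun k : ℕ => ENNReal.ofReal (DA ^ t * lam ^ k)) atTop (𝓝 0) := by
      rw [show (0:ℝ≥0∞) = ENNReal.ofReal 0 by simp]
      refine ENNReal.tendsto_ofReal ?_
      simpa using (tendsto_pow_atTop_nhds_zero_of_lt_one hlam0 ht).const_mul (DA ^ t)
    calc liminf (fun k : ℕ => ∑ w : Fin k → Fin n,
          EMetric.diam (F f (List.ofFn w) '' A) ^ t) atTop
        ≤ liminf (fun k : ℕ => ENNReal.ofReal (DA ^ t * lam ^ k)) atTop := by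
          refine liminf_le_liminf (Eventually.of_forall hterm)
      _ = 0 := htend.liminf_eq
  · rw [show (0:ℝ≥0∞) = ENNReal.ofReal 0 by simp]
    refine ENNReal.tendsto_ofReal ?_
    simpa [mul_comm] using (tendsto_pow_atTop_nhds_zero_of_lt_one hb0.le hb1).mul_const DA
  · refine Eventually.of_forall fun k => fun w => ?_
    have h1 : EMetric.diam (F f (List.ofFn w) '' A) ≤
        ((rr c (List.ofFn w)).toNNReal : ℝ≥0∞) * EMetric.diam A :=
      (F_lipschitz hsim (List.ofFn w)).ediam_image_le A
    refine h1.trans ?_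
    have h2 : ((rr c (List.ofFn w)).toNNReal : ℝ≥0∞) * EMetric.diam A
        ≤ ENNReal.ofReal (rr c (List.ofFn w)) * ENNReal.ofReal DA :=
      mul_le_mul_right hediamA _
    refine h2.trans ?_
    rw [← ENNReal.ofReal_mul (rr_nonneg hc0 _)]
    refine ENNReal.ofReal_le_ofReal ?_
    have : rr c (List.ofFn w) ≤ b ^ k := by
      have := rr_pre_le hble hb0.le hc0 (fun j => if h : j < k then w ⟨j, h⟩ else ⟨0, hn⟩) k
      have heq : pre (fun j => if h : j < k then w ⟨j, h⟩ else ⟨0, hn⟩) k = List.ofFn w := by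
        rw [pre]
        congr 1
        funext j
        simp [j.isLt]
      rwa [heq] at this
    exact mul_le_mul_of_nonneg_right this hDA0
  · exact Eventually.of_forall fun k => A_subset_iUnion hinv k

end Upper

section Lower

variable {d n : ℕ}

local notation "E" => EuclideanSpace ℝ (Fin d)

lemma sum_biUnion_le' {g : List (Fin n) → ℝ} (hg : ∀ w, 0 ≤ g w)
    (F : Finset ℕ) (W : ℕ → Finset (List (Fin n))) :
    ∑ w ∈ F.biUnion W, g w ≤ ∑ m ∈ F, ∑ w ∈ W m, g w := by
  classical
  induction F using Finset.induction with
  | empty => simp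
  | @insert a Fa hm ih =>
    rw [Finset.biUnion_insert, Finset.sum_insert hm]
    refine le_trans ?_ (add_le_add_right ih _)
    have h1 : ∑ w ∈ W a ∪ Fa.biUnion W, g w + ∑ w ∈ (W a) ∩ (Fa.biUnion W), g w
        = ∑ w ∈ W a, g w + ∑ w ∈ Fa.biUnion W, g w := Finset.sum_union_inter
    have h2 : 0 ≤ ∑ w ∈ (W a) ∩ (Fa.biUnion W), g w :=
      Finset.sum_nonneg fun w _ => hg w
    linarith

lemma geom_finset_le {q : ℝ} (hq0 : 0 ≤ q) (hq1 : q < 1) (F : Finset ℕ) :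
    ∑ m ∈ F, q ^ m ≤ (1 - q)⁻¹ := by
  classical
  set N : ℕ := F.sup id + 1 with hN
  have hsub : F ⊆ Finset.range N := by
    intro m hm
    rw [Finset.mem_range]
    have := Finset.le_sup (f := id) hm
    simp only [id] at this
    omega
  have h1 : ∑ m ∈ F, q ^ m ≤ ∑ m ∈ Finset.range N, q ^ m :=
    Finset.sum_le_sum_of_subset_of_nonneg hsub fun m _ _ => pow_nonneg hq0 m
  refine h1.trans ?_
  have h2 : ∑ m ∈ Finset.range N, q ^ m = (1 - q ^ N) / (1 - q) := by
    rw [geom_sum_eq hq1.ne N]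
    rw [div_eq_div_iff (by linarith) (by linarith)]
    ring
  rw [h2]
  rw [div_le_iff₀ (by linarith)]
  have : (1 - q)⁻¹ * (1 - q) = 1 := inv_mul_cancel₀ (by linarith)
  rw [this]
  have : 0 ≤ q ^ N := pow_nonneg hq0 N
  linarith

lemma pre_get (ω : ℕ → Fin n) (k : ℕ) (i : Fin (pre ω k).length) :
    (pre ω k).get i = ω i := by
  have h : (pre ω k).get i = (List.ofFn fun j : Fin k => ω j).get
      (Fin.cast (by simp [pre]) i) := by
    congr 1 <;> simp [pre]
  rw [h, List.get_ofFn]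
  simp

lemma cylinder_isOpen (hn : 0 < n) (w : List (Fin n)) :
    IsOpen {ω : ℕ → Fin n | pre ω w.length = w} := by
  have heq : {ω : ℕ → Fin n | pre ω w.length = w}
      = ⋂ j : Fin w.length, {ω : ℕ → Fin n | ω j = w.get j} := by
    ext ω
    simp only [Set.mem_setOf_eq, Set.mem_iInter]
    constructor
    · intro h j
      have h1 := List.get_of_eq h (Fin.cast (pre_length ω w.length).symm j)
      rw [pre_get] at h1
      simpa using h1
    · intro h
      refine List.ext_get (by simp) fun j h1 h2 => ?_
      rw [pre_get ω w.length ⟨j, h1⟩]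
      exact h ⟨j, h2⟩
  rw [heq]
  refine isOpen_iInter_of_finite fun j => ?_
  have : {ω : ℕ → Fin n | ω j = w.get j}
      = (fun ω : ℕ → Fin n => ω (j : ℕ)) ⁻¹' {w.get j} := rfl
  rw [this]
  exact (continuous_apply ((j : ℕ))).isOpen_preimage _ (isOpen_discrete _)

lemma lower_pos (hn : 0 < n) {c : Fin n → ℝ} {f : Fin n → E → E}
    (hc : ∀ i, c i ∈ Ioo (0:ℝ) 1)
    (hsim : ∀ i x y, dist (f i x) (f i y) = c i * dist x y)
    {V : Set E} (hVne : V.Nonempty) (hVb : Bornology.IsBounded V) (hVo : IsOpen V)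
    (hFV : ∀ i, f i '' V ⊆ V)
    (hdisj : ∀ i j, i ≠ j → Disjoint (f i '' V) (f j '' V))
    {A : Set E} (hA : IsCompact A) (hAne : A.Nonempty) (hinv : A = ⋃ i, f i '' A)
    {s : ℝ} (hs0 : 0 < s) (hsum : ∑ i, c i ^ s = 1) :
    μH[s] A ≠ 0 := by
  classical
  haveI : Nonempty (Fin n) := ⟨⟨0, hn⟩⟩
  have hc0 : ∀ i, 0 < c i := fun i => (hc i).1
  have hc1 : ∀ i, c i < 1 := fun i => (hc i).2
  set b : ℝ := Finset.univ.sup' Finset.univ_nonempty c with hbdef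
  have hble : ∀ i, c i ≤ b := fun i => Finset.le_sup' c (Finset.mem_univ i)
  have hb1 : b < 1 := (Finset.sup'_lt_iff _).2 fun i _ => hc1 i
  have hb0 : 0 < b := lt_of_lt_of_le (hc0 (Classical.arbitrary _)) (hble _)
  -- the coding map
  obtain ⟨π, hπ3, hπsurj⟩ := exists_coding hc0 hble hb0.le hb1 hsim hA hAne hinv
  have hπA : ∀ ω, π ω ∈ A := by
    intro ω
    have := hπ3 ω 0
    simpa using this
  -- the counting constant
  obtain ⟨Nr, hNr0, hcount⟩ := counting hn hc hsim hVne hVb hVo hFV hdisj hA hπ3 hs0.le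
  set Np : ℝ := Nr + 1 with hNp
  have hNp0 : 0 < Np := by linarith
  -- geometric series constant
  set q : ℝ := (2⁻¹ : ℝ) ^ s with hq
  have hq0 : 0 < q := Real.rpow_pos_of_pos (by norm_num) s
  have hq1 : q < 1 := Real.rpow_lt_one (by norm_num) (by norm_num) hs0
  set G : ℝ := (1 - q)⁻¹ with hG
  have hG0 : 0 < G := by
    rw [hG]
    exact inv_pos.2 (by linarith)
  -- choice of ε
  set x : ℝ := 1 / (2 * Np * G) with hx
  have hx0 : 0 < x := by positivity
  set ε : ℝ := min 2⁻¹ (x ^ s⁻¹) with hε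
  have hε0 : 0 < ε := lt_min (by norm_num) (Real.rpow_pos_of_pos hx0 _)
  have hεhalf : ε ≤ 2⁻¹ := min_le_left _ _
  have hεs : Np * (ε ^ s * G) ≤ 2⁻¹ := by
    have h1 : ε ^ s ≤ x := by
      calc ε ^ s ≤ (x ^ s⁻¹) ^ s :=
            Real.rpow_le_rpow hε0.le (min_le_right _ _) hs0.le
      _ = x := Real.rpow_inv_rpow hx0.le hs0.ne'
    calc Np * (ε ^ s * G) ≤ Np * (x * G) := by
          refine mul_le_mul_of_nonneg_left (mul_le_mul_of_nonneg_right h1 hG0.le) hNp0.le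
    _ = 2⁻¹ := by
          rw [hx]
          field_simp
  -- it suffices to bound below all covers at scale 1/2
  have key : ∀ t : ℕ → Set E, A ⊆ ⋃ m, t m →
      (∀ m, EMetric.diam (t m) ≤ ENNReal.ofReal 2⁻¹) →
      ENNReal.ofReal ((2 * Np)⁻¹) ≤ ∑' m, ⨆ _ : (t m).Nonempty, EMetric.diam (t m) ^ s := by
    intro t hcov hdiam
    have hdiam' : ∀ m, Metric.diam (t m) ≤ 2⁻¹ := by
      intro m
      exact ENNReal.toReal_le_of_le_ofReal (by norm_num) (hdiam m)
    have htb : ∀ m, Bornology.IsBounded (t m) := by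
      intro m
      rw [Metric.isBounded_iff_ediam_ne_top]
      exact ne_top_of_le_ne_top ENNReal.ofReal_ne_top (hdiam m)
    set ρ : ℕ → ℝ := fun m => max (Metric.diam (t m)) (ε * 2⁻¹ ^ m) with hρ
    have hρ0 : ∀ m, 0 < ρ m := fun m =>
      lt_max_of_lt_right (by positivity)
    have hρ1 : ∀ m, ρ m ≤ 1 := by
      intro m
      refine max_le ((hdiam' m).trans (by norm_num)) ?_
      calc ε * 2⁻¹ ^ m ≤ 2⁻¹ * 1 := by
            refine mul_le_mul hεhalf ?_ (by positivity) (by norm_num)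
            exact pow_le_one₀ (by norm_num) (by norm_num)
      _ ≤ 1 := by norm_num
    have hWm : ∀ m : ℕ, ∃ W : Finset (List (Fin n)),
        (∀ ω : ℕ → Fin n, π ω ∈ t m → ∃ w ∈ W, pre ω w.length = w) ∧
        (∑ w ∈ W, rr c w ^ s ≤ Nr * ρ m ^ s) := fun m =>
      hcount (ρ m) (hρ0 m) (hρ1 m) (t m) (htb m) (le_max_left _ _)
    choose W hWcov hWsum using hWm
    -- compactness: finitely many m suffice
    set O : ℕ → Set (ℕ → Fin n) := fun m => ⋃ w ∈ W m, {ω | pre ω w.length = w} with hO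
    have hOopen : ∀ m, IsOpen (O m) := fun m =>
      isOpen_biUnion fun w _ => cylinder_isOpen hn w
    have hOcov : (Set.univ : Set (ℕ → Fin n)) ⊆ ⋃ m, O m := by
      intro ω _
      obtain ⟨m, hm⟩ := Set.mem_iUnion.1 (hcov (hπA ω))
      obtain ⟨w, hw, hwpre⟩ := hWcov m ω hm
      exact Set.mem_iUnion.2 ⟨m, Set.mem_biUnion hw hwpre⟩
    obtain ⟨Fs, hFs⟩ := isCompact_univ.elim_finite_subcover O hOopen hOcov
    set Wall : Finset (List (Fin n)) := Fs.biUnion W with hWall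
    have hcovall : ∀ ω : ℕ → Fin n, ∃ w ∈ Wall, pre ω w.length = w := by
      intro ω
      obtain ⟨m, hmF, hmO⟩ := Set.mem_iUnion₂.1 (hFs (Set.mem_univ ω))
      obtain ⟨w, hw, hwpre⟩ := Set.mem_iUnion₂.1 hmO
      exact ⟨w, Finset.mem_biUnion.2 ⟨m, hmF, hw⟩, hwpre⟩
    have hone : (1:ℝ) ≤ ∑ w ∈ Wall, rr c w ^ s :=
      tree_lemma hn hc0 hsum (Wall.sup List.length) Wall
        (fun w hw => Finset.le_sup hw) hcovall
    -- split the bound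
    have h2 : ∑ w ∈ Wall, rr c w ^ s ≤ ∑ m ∈ Fs, ∑ w ∈ W m, rr c w ^ s :=
      sum_biUnion_le' (fun w => Real.rpow_nonneg (rr_nonneg hc0 w) s) Fs W
    set S : ℝ := ∑ m ∈ Fs, Metric.diam (t m) ^ s with hSdef
    have hS0 : 0 ≤ S :=
      Finset.sum_nonneg fun m _ => Real.rpow_nonneg Metric.diam_nonneg s
    have h3 : ∑ m ∈ Fs, ∑ w ∈ W m, rr c w ^ s ≤ Np * S + Np * (ε ^ s * G) := by
      have hterm : ∀ m, ∑ w ∈ W m, rr c w ^ s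
          ≤ Np * (Metric.diam (t m) ^ s + ε ^ s * q ^ m) := by
        intro m
        have hρs : ρ m ^ s ≤ Metric.diam (t m) ^ s + ε ^ s * q ^ m := by
          have hsplit : (ε * 2⁻¹ ^ m) ^ s = ε ^ s * q ^ m := by
            rw [Real.mul_rpow hε0.le (by positivity)]
            congr 1
            rw [hq, ← Real.rpow_natCast (2⁻¹ : ℝ) m, ← Real.rpow_mul (by norm_num),
              ← Real.rpow_natCast ((2⁻¹ : ℝ) ^ s) m, ← Real.rpow_mul (by norm_num),
              mul_comm]
          rcases max_cases (Metric.diam (t m)) (ε * 2⁻¹ ^ m) with ⟨hmax, _⟩ | ⟨hmax, _⟩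
          · rw [hρ]
            simp only
            rw [hmax]
            have : 0 ≤ ε ^ s * q ^ m := by positivity
            linarith
          · rw [hρ]
            simp only
            rw [hmax, hsplit]
            have : 0 ≤ Metric.diam (t m) ^ s :=
              Real.rpow_nonneg Metric.diam_nonneg s
            linarith
        calc ∑ w ∈ W m, rr c w ^ s ≤ Nr * ρ m ^ s := hWsum m
        _ ≤ Np * (Metric.diam (t m) ^ s + ε ^ s * q ^ m) := by
            refine mul_le_mul (by rw [hNp]; linarith) hρs
              (Real.rpow_nonneg (le_of_lt (hρ0 m)) s) hNp0.le
      calc ∑ m ∈ Fs, ∑ w ∈ W m, rr c w ^ s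
          ≤ ∑ m ∈ Fs, Np * (Metric.diam (t m) ^ s + ε ^ s * q ^ m) :=
            Finset.sum_le_sum fun m _ => hterm m
        _ = ∑ m ∈ Fs, (Np * Metric.diam (t m) ^ s + Np * (ε ^ s * q ^ m)) :=
            Finset.sum_congr rfl fun m _ => by ring
        _ = ∑ m ∈ Fs, Np * Metric.diam (t m) ^ s
            + ∑ m ∈ Fs, Np * (ε ^ s * q ^ m) := Finset.sum_add_distrib
        _ = Np * S + Np * (ε ^ s * ∑ m ∈ Fs, q ^ m) := by
            rw [hSdef, Finset.mul_sum]
            congr 1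
            rw [Finset.mul_sum, Finset.mul_sum]
        _ ≤ Np * S + Np * (ε ^ s * G) := by
            refine add_le_add_right ?_ _
            refine mul_le_mul_of_nonneg_left ?_ hNp0.le
            refine mul_le_mul_of_nonneg_left (geom_finset_le hq0.le hq1 Fs) ?_
            positivity
    have h4 : (2 * Np)⁻¹ ≤ S := by
      have h5 : (1:ℝ) ≤ Np * S + Np * (ε ^ s * G) := hone.trans (h2.trans h3)
      have h7 : 2⁻¹ ≤ Np * S := by
        calc (2⁻¹:ℝ) = 1 - 2⁻¹ := by norm_num
        _ ≤ (Np * S + Np * (ε ^ s * G)) - Np * (ε ^ s * G) := sub_le_sub h5 hεs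
        _ = Np * S := by ring
      have h8 : (2 * Np)⁻¹ = 2⁻¹ / Np := by
        rw [mul_inv, div_eq_mul_inv]
      rw [h8, div_le_iff₀ hNp0, mul_comm]
      exact h7
    -- pass to the extended sum
    calc ENNReal.ofReal ((2 * Np)⁻¹) ≤ ENNReal.ofReal (∑ m ∈ Fs, Metric.diam (t m) ^ s) :=
          ENNReal.ofReal_le_ofReal (le_of_le_of_eq h4 hSdef)
    _ = ∑ m ∈ Fs, ENNReal.ofReal (Metric.diam (t m) ^ s) :=
          ENNReal.ofReal_sum_of_nonneg fun m _ => Real.rpow_nonneg Metric.diam_nonneg s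
    _ ≤ ∑ m ∈ Fs, ⨆ _ : (t m).Nonempty, EMetric.diam (t m) ^ s := by
          refine Finset.sum_le_sum fun m _ => ?_
          rcases Set.eq_empty_or_nonempty (t m) with hem | hne
          · rw [hem]
            simp [Real.zero_rpow hs0.ne']
          · rw [ciSup_pos hne]
            have hdne : EMetric.diam (t m) ≠ ∞ :=
              ne_top_of_le_ne_top ENNReal.ofReal_ne_top (hdiam m)
            rw [show Metric.diam (t m) = (EMetric.diam (t m)).toReal from rfl]
            rw [ENNReal.toReal_rpow]
            rw [ENNReal.ofReal_toReal (ENNReal.rpow_ne_top_of_nonneg hs0.le hdne)]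
    _ ≤ ∑' m, ⨆ _ : (t m).Nonempty, EMetric.diam (t m) ^ s := ENNReal.sum_le_tsum Fs
  -- now conclude via the formula for Hausdorff measure
  have hμ : ENNReal.ofReal ((2 * Np)⁻¹) ≤ μH[s] A := by
    rw [MeasureTheory.Measure.hausdorffMeasure_apply]
    refine le_iSup₂_of_le (ENNReal.ofReal 2⁻¹) (by simp) ?_
    refine le_iInf fun t => le_iInf fun hcov => le_iInf fun hdiam => ?_
    exact key t hcov hdiam
  intro h0
  rw [h0] at hμ
  simp only [nonpos_iff_eq_zero, ENNReal.ofReal_eq_zero] at hμ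
  have : (0:ℝ) < (2 * Np)⁻¹ := by positivity
  linarith

end Lower

end MoranAux

open MoranAux in
/-- Moran's theorem: if `f₁, …, f_n : ℝ^d → ℝ^d` are contracting similarities with ratios
`c₁, …, c_n` satisfying the open set condition and `A` is a nonempty compact set with
`A = f₁(A) ∪ ⋯ ∪ f_n(A)`, then `dim_H A = s` where `∑ cᵢ^s = 1`. -/
theorem stmt_9 (d n : ℕ)
    (f : Fin n → EuclideanSpace ℝ (Fin d) → EuclideanSpace ℝ (Fin d))
    (c : Fin n → ℝ) (hc : ∀ i, c i ∈ Ioo (0 : ℝ) 1)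
    (hsim : ∀ i x y, dist (f i x) (f i y) = c i * dist x y)
    (V : Set (EuclideanSpace ℝ (Fin d))) (hVne : V.Nonempty)
    (hVb : Bornology.IsBounded V) (hVo : IsOpen V)
    (hFV : (⋃ i, f i '' V) ⊆ V)
    (hdisj : ∀ i j, i ≠ j → Disjoint (f i '' V) (f j '' V))
    (A : Set (EuclideanSpace ℝ (Fin d))) (hA : IsCompact A) (hAne : A.Nonempty)
    (hinv : A = ⋃ i, f i '' A)
    (s : ℝ) (hs : ∑ i, c i ^ s = 1) :
    dimH A = ENNReal.ofReal s := by
  classical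
  have hn : 0 < n := by
    rcases Nat.eq_zero_or_pos n with rfl | h
    · simp at hs
    · exact h
  haveI : Nonempty (Fin n) := ⟨⟨0, hn⟩⟩
  have hc0 : ∀ i, 0 < c i := fun i => (hc i).1
  have hc1 : ∀ i, c i < 1 := fun i => (hc i).2
  have hFV' : ∀ i, f i '' V ⊆ V := fun i =>
    (Set.subset_iUnion (fun i => f i '' V) i).trans hFV
  have hs0 : 0 ≤ s := by
    by_contra h
    push_neg at h
    have h1 : ∀ i, 1 < c i ^ s := fun i =>
      Real.one_lt_rpow_of_pos_of_lt_one_of_neg (hc0 i) (hc1 i) h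
    have h2 : (1:ℝ) ≤ ∑ _i : Fin n, (1:ℝ) := by
      simp only [Finset.sum_const, Finset.card_univ, Fintype.card_fin, nsmul_eq_mul, mul_one]
      exact_mod_cast hn
    have h3 : ∑ _i : Fin n, (1:ℝ) < ∑ i, c i ^ s :=
      Finset.sum_lt_sum_of_nonempty Finset.univ_nonempty fun i _ => h1 i
    rw [hs] at h3
    linarith
  have hupper : dimH A ≤ ENNReal.ofReal s := by
    refine dimH_le fun d' hd' => ?_
    by_contra hlt
    push_neg at hlt
    have hd'0 : (0:ℝ) < (d' : ℝ) := by
      have h0 : (0:ℝ≥0∞) < (d' : ℝ≥0∞) := lt_of_le_of_lt zero_le hlt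
      exact_mod_cast h0
    have hsd : s < (d' : ℝ) := by
      rw [← ENNReal.ofReal_coe_nnreal] at hlt
      exact (ENNReal.ofReal_lt_ofReal_iff hd'0).1 hlt
    have hsum_lt : ∑ i, c i ^ ((d':ℝ)) < 1 := by
      rw [← hs]
      exact Finset.sum_lt_sum_of_nonempty Finset.univ_nonempty fun i _ =>
        Real.rpow_lt_rpow_of_exponent_gt (hc0 i) (hc1 i) hsd
    exact absurd (upper_zero hc hsim hA hinv (NNReal.coe_nonneg d') hsum_lt ▸ hd')
      (by simp)
  rcases eq_or_lt_of_le hs0 with hs0' | hs0'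
  · refine le_antisymm hupper ?_
    rw [← hs0']
    simp
  · refine le_antisymm hupper ?_
    have hne := lower_pos hn hc hsim hVne hVb hVo hFV' hdisj hA hAne hinv hs0' hs
    have hne' : μH[((s.toNNReal : ℝ≥0) : ℝ)] A ≠ 0 := by
      rwa [Real.coe_toNNReal _ hs0]
    have := le_dimH_of_hausdorffMeasure_ne_zero hne'
    rwa [show ((s.toNNReal : ℝ≥0) : ℝ≥0∞) = ENNReal.ofReal s from rfl] at this
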